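/- arXiv:1708.02317 — 2 statements merged into one kernel-verified Lean document; each statement's English description precedes it below -/
import Mathlib

section
/- Let λ > 0 and let G be a connected finite simple graph with spectral radius λ₁(G) ≤ λ, with adjacency matrix A and number of vertices v(G). If the spectral radius order k(λ) is finite, then v(G) ≤ (k(λ)/(k(λ)−1)) · rank(I − A/λ). If k(λ) = ∞, then v(G) ≤ rank(I − A/λ). -/
open scoped Classical

/-- The adjacency matrix (over `ℝ`) of a simple graph. -/
noncomputable def adjMat {V : Type*} [Fintype V] (G : SimpleGraph V) : Matrix V V ℝ :=
  fun i j => if G.Adj i j then 1 else 0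

/-- The spectral radius of a finite simple graph: the largest eigenvalue of its
adjacency matrix. -/
noncomputable def specRad {V : Type*} [Fintype V] (G : SimpleGraph V) : ℝ :=
  sSup {μ : ℝ | ∃ v : V → ℝ, v ≠ 0 ∧ (adjMat G).mulVec v = μ • v}

/-- `Contains G H` : the graph `H` contains a copy of `G` as a subgraph. -/
def Contains {V W : Type*} (G : SimpleGraph V) (H : SimpleGraph W) : Prop :=
  ∃ f : V → W, Function.Injective f ∧ ∀ ⦃a b⦄, G.Adj a b → H.Adj (f a) (f b)

/-- `beta m` : the unique positive real root of `x^(m+1) = 1 + x + ⋯ + x^(m-1)`. -/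
noncomputable def beta (m : ℕ) : ℝ :=
  sSup {x : ℝ | 0 < x ∧ x ^ (m + 1) = ∑ i ∈ Finset.range m, x ^ i}

/-- `alpha m = beta m ^ (1/2) + beta m ^ (-1/2)`. -/
noncomputable def alpha (m : ℕ) : ℝ :=
  Real.sqrt (beta m) + (Real.sqrt (beta m))⁻¹

/-- `λ* = √(2+√5)`. -/
noncomputable def lambdaStar : ℝ := Real.sqrt (2 + Real.sqrt 5)

/-- A spherical `L`-code in `ℝ^n`: a finite set of unit vectors whose pairwise
inner products lie in `L`. -/
def SphericalCode (n : ℕ) (L : Set ℝ) (C : Finset (EuclideanSpace ℝ (Fin n))) : Prop :=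
  (∀ v ∈ C, ‖v‖ = 1) ∧
  ∀ v ∈ C, ∀ w ∈ C, v ≠ w → (inner ℝ v w : ℝ) ∈ L

/-- `Nmax a n` : the maximum cardinality of a spherical `{-a, a}`-code in `ℝ^n`,
i.e. the maximum number of equiangular lines in `ℝ^n` with angle `arccos a`. -/
noncomputable def Nmax (a : ℝ) (n : ℕ) : ℕ :=
  sSup {k : ℕ | ∃ C : Finset (EuclideanSpace ℝ (Fin n)),
    SphericalCode n {-a, a} C ∧ C.card = k}

/-- The spectral radius order of `l` : the smallest number of vertices of a finite
simple graph whose spectral radius is `l`; `⊤` if there is no such graph. -/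
noncomputable def specOrder (l : ℝ) : ℕ∞ :=
  sInf ((fun k : ℕ => (k : ℕ∞)) '' {k : ℕ | ∃ G : SimpleGraph (Fin k), specRad G = l})

/-- The set `L(α, t)` from the paper. -/
noncomputable def Lset (a : ℝ) (t : ℕ) : Set ℝ :=
  { -(1 / ((1 - a) / (2 * a))) * (1 - 1 / ((t : ℝ) + a⁻¹)) + 1 / ((t : ℝ) + a⁻¹),
    1 / ((t : ℝ) + a⁻¹) }

/-- The underlying graph of a spherical code: vertices are the code vectors, two
of them adjacent iff their inner product is negative. -/
def codeGraph {n : ℕ} (C : Finset (EuclideanSpace ℝ (Fin n))) :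
    SimpleGraph {v // v ∈ C} :=
  SimpleGraph.fromRel (fun v w =>
    (inner ℝ (v : EuclideanSpace ℝ (Fin n)) (w : EuclideanSpace ℝ (Fin n)) : ℝ) < 0)

/-- `x` is a totally real algebraic integer: it is integral over `ℤ` and every
complex root of its minimal polynomial over `ℚ` is real. -/
def TotallyRealAlgInt (x : ℝ) : Prop :=
  IsIntegral ℤ x ∧ ∀ z : ℂ, Polynomial.aeval z (minpoly ℚ x) = 0 → z.im = 0

section helpers
set_option linter.unusedSectionVars false
open Matrix

def eigSet {V : Type*} [Fintype V] (G : SimpleGraph V) : Set ℝ :=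
  {μ : ℝ | ∃ v : V → ℝ, v ≠ 0 ∧ (adjMat G).mulVec v = μ • v}

lemma specRad_eq {V : Type*} [Fintype V] (G : SimpleGraph V) : specRad G = sSup (eigSet G) := rfl

lemma adjMat_nonneg {V : Type*} [Fintype V] (G : SimpleGraph V) (i j : V) : 0 ≤ adjMat G i j := by
  unfold adjMat; split <;> norm_num

lemma adjMat_le_one {V : Type*} [Fintype V] (G : SimpleGraph V) (i j : V) : adjMat G i j ≤ 1 := by
  unfold adjMat; split <;> norm_num

lemma eigSet_bddAbove {V : Type*} [Fintype V] (G : SimpleGraph V) : BddAbove (eigSet G) := by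
  refine ⟨(Fintype.card V : ℝ), fun μ hμ => ?_⟩
  obtain ⟨v, hv0, hv⟩ := hμ
  obtain ⟨j0, hj0⟩ := Function.ne_iff.mp hv0
  obtain ⟨i, hi, hmax⟩ := Finset.exists_max_image Finset.univ (fun i => |v i|) ⟨j0, Finset.mem_univ _⟩
  · have hvi : 0 < |v i| := by
      have h1 : 0 < |v j0| := abs_pos.mpr hj0
      linarith [hmax j0 (Finset.mem_univ j0)]
    have h1 : μ * v i = (adjMat G).mulVec v i := by rw [hv]; rfl
    have h2 : |((adjMat G).mulVec v) i| ≤ (Fintype.card V : ℝ) * |v i| := by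
      rw [mulVec, dotProduct]
      calc |∑ j, adjMat G i j * v j| ≤ ∑ j, |adjMat G i j * v j| := Finset.abs_sum_le_sum_abs _ _
        _ ≤ ∑ _j : V, |v i| := by
            refine Finset.sum_le_sum fun j _ => ?_
            rw [abs_mul]
            calc |adjMat G i j| * |v j| ≤ 1 * |v i| := by
                  apply mul_le_mul _ (hmax j (Finset.mem_univ j)) (abs_nonneg _) zero_le_one
                  rw [abs_of_nonneg (adjMat_nonneg G i j)]; exact adjMat_le_one G i j
              _ = |v i| := one_mul _
        _ = (Fintype.card V : ℝ) * |v i| := by rw [Finset.sum_const, Finset.card_univ, nsmul_eq_mul]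
    have : |μ| * |v i| ≤ (Fintype.card V : ℝ) * |v i| := by
      rw [← abs_mul, h1]; exact h2
    have hμle : |μ| ≤ (Fintype.card V : ℝ) := le_of_mul_le_mul_right (by linarith) hvi
    exact (le_abs_self μ).trans hμle

variable {V : Type*} [Fintype V] [DecidableEq V]

lemma adjMat_isHermitian (G : SimpleGraph V) : (adjMat G).IsHermitian := by
  ext i j
  simp only [conjTranspose_apply, adjMat, star_trivial]
  rw [SimpleGraph.adj_comm]

lemma N_isHermitian (lam : ℝ) (G : SimpleGraph V) :
    ((1 : Matrix V V ℝ) - lam⁻¹ • adjMat G).IsHermitian := by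
  ext i j
  simp only [conjTranspose_apply, Matrix.sub_apply, Matrix.smul_apply, one_apply, adjMat, star_trivial,
    smul_eq_mul]
  by_cases h : i = j
  · simp [h]
  · rw [if_neg (fun hh => h hh.symm), if_neg h, SimpleGraph.adj_comm]

lemma N_mulVec_eq_zero_iff {lam : ℝ} (hlam : 0 < lam) (G : SimpleGraph V) (v : V → ℝ) :
    ((1 : Matrix V V ℝ) - lam⁻¹ • adjMat G) *ᵥ v = 0 ↔ (adjMat G) *ᵥ v = lam • v := by
  rw [sub_mulVec, one_mulVec, smul_mulVec, sub_eq_zero]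
  constructor
  · intro h
    have := congrArg (fun x => lam • x) h
    simpa [smul_smul, mul_inv_cancel₀ hlam.ne'] using this.symm
  · intro h
    rw [h, smul_smul, inv_mul_cancel₀ hlam.ne', one_smul]

lemma eig_le_lam {lam : ℝ} (G : SimpleGraph V) (hle : specRad G ≤ lam) {μ : ℝ}
    (hμ : μ ∈ eigSet G) : μ ≤ lam :=
  le_trans (le_csSup (eigSet_bddAbove G) hμ) hle

lemma N_posSemidef {lam : ℝ} (hlam : 0 < lam) (G : SimpleGraph V) (hle : specRad G ≤ lam) :
    ((1 : Matrix V V ℝ) - lam⁻¹ • adjMat G).PosSemidef := by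
  set N := (1 : Matrix V V ℝ) - lam⁻¹ • adjMat G with hN
  have hher := N_isHermitian lam G
  refine hher.posSemidef_iff_eigenvalues_nonneg.mpr fun i => (?_ : 0 ≤ hher.eigenvalues i)
  set t := hher.eigenvalues i with ht
  by_contra hneg
  push_neg at hneg
  have hb := hher.mulVec_eigenvectorBasis i
  set b : V → ℝ := ⇑(hher.eigenvectorBasis i) with hbdef
  have hb0 : b ≠ 0 := by
    intro h
    have h0 : hher.eigenvectorBasis i = 0 := by
      simpa [hbdef] using congrArg (WithLp.toLp 2) h
    have hnorm : ‖hher.eigenvectorBasis i‖ = 1 := hher.eigenvectorBasis.orthonormal.1 i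
    rw [h0] at hnorm; simp at hnorm
  -- A *ᵥ b = (lam * (1 - t)) • b
  have hAb : (adjMat G) *ᵥ b = (lam * (1 - t)) • b := by
    have h1 : b - lam⁻¹ • ((adjMat G) *ᵥ b) = t • b := by
      simpa [hN, sub_mulVec, one_mulVec, smul_mulVec] using hb
    have h2 : lam⁻¹ • ((adjMat G) *ᵥ b) = (1 - t) • b := by
      rw [sub_smul, one_smul, ← h1]; module
    have := congrArg (fun x => lam • x) h2
    simpa [smul_smul, mul_inv_cancel₀ hlam.ne'] using this
  have hmem : lam * (1 - t) ∈ eigSet G := ⟨b, hb0, hAb⟩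
  have := eig_le_lam G hle hmem
  nlinarith

lemma dot_mulVec_expand (A : Matrix V V ℝ) (x : V → ℝ) :
    x ⬝ᵥ (A *ᵥ x) = ∑ i, ∑ j, A i j * (x i * x j) := by
  simp only [dotProduct, mulVec, Finset.mul_sum]
  exact Finset.sum_congr rfl fun i _ => Finset.sum_congr rfl fun j _ => by ring

lemma quad_eq {lam : ℝ} (G : SimpleGraph V) (x : V → ℝ) :
    x ⬝ᵥ (((1 : Matrix V V ℝ) - lam⁻¹ • adjMat G) *ᵥ x)
      = x ⬝ᵥ x - lam⁻¹ * (x ⬝ᵥ (adjMat G *ᵥ x)) := by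
  rw [sub_mulVec, one_mulVec, smul_mulVec, dotProduct_sub, dotProduct_smul, smul_eq_mul]

lemma sign_trans {a b c : ℝ} (h1 : 0 < a * b) (h2 : 0 < b * c) : 0 < a * c := by
  rcases lt_trichotomy b 0 with hb | hb | hb
  · have ha : a < 0 := by nlinarith
    have hcc : c < 0 := by nlinarith
    nlinarith
  · rw [hb] at h1; simp at h1
  · have ha : 0 < a := by nlinarith
    have hcc : 0 < c := by nlinarith
    nlinarith

lemma kernel_sign {lam : ℝ} (hlam : 0 < lam) (G : SimpleGraph V) (hc : G.Connected)
    (hle : specRad G ≤ lam) {v : V → ℝ}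
    (hv : ((1 : Matrix V V ℝ) - lam⁻¹ • adjMat G) *ᵥ v = 0) (hv0 : v ≠ 0) :
    ∀ i j, 0 < v i * v j := by
  set A := adjMat G with hA
  set w : V → ℝ := fun i => |v i| with hw
  have hww : w ⬝ᵥ w = v ⬝ᵥ v :=
    Finset.sum_congr rfl fun i _ => abs_mul_abs_self _
  have hAv : A *ᵥ v = lam • v := (N_mulVec_eq_zero_iff hlam G v).mp hv
  have hwAw : v ⬝ᵥ (A *ᵥ v) ≤ w ⬝ᵥ (A *ᵥ w) := by
    rw [dot_mulVec_expand, dot_mulVec_expand]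
    refine Finset.sum_le_sum fun i _ => Finset.sum_le_sum fun j _ => ?_
    refine mul_le_mul_of_nonneg_left ?_ (adjMat_nonneg G i j)
    calc v i * v j ≤ |v i * v j| := le_abs_self _
      _ = w i * w j := abs_mul _ _
  have hquadv : v ⬝ᵥ (((1 : Matrix V V ℝ) - lam⁻¹ • A) *ᵥ v) = 0 := by
    rw [hv, dotProduct_zero]
  have hquadw : w ⬝ᵥ (((1 : Matrix V V ℝ) - lam⁻¹ • A) *ᵥ w) ≤ 0 := by
    rw [quad_eq] at hquadv ⊢
    rw [hww]
    have h1 := mul_le_mul_of_nonneg_left hwAw (le_of_lt (inv_pos.mpr hlam))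
    linarith
  have hpsd := N_posSemidef hlam G hle
  have hq0 : w ⬝ᵥ (((1 : Matrix V V ℝ) - lam⁻¹ • A) *ᵥ w) = 0 := by
    have h2 := hpsd.dotProduct_mulVec_nonneg w
    rw [show star w = w from star_trivial w] at h2
    linarith
  have hNw : ((1 : Matrix V V ℝ) - lam⁻¹ • A) *ᵥ w = 0 := by
    have := (hpsd.dotProduct_mulVec_zero_iff w).mp
      (by rw [show star w = w from star_trivial w]; exact hq0)
    exact this
  have hAw : A *ᵥ w = lam • w := (N_mulVec_eq_zero_iff hlam G w).mp hNw
  have hwnn : ∀ i, 0 ≤ w i := fun i => abs_nonneg _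
  obtain ⟨i₀, hi₀⟩ := Function.ne_iff.mp hv0
  rw [Pi.zero_apply] at hi₀
  have hw₀ : 0 < w i₀ := abs_pos.mpr hi₀
  have step : ∀ i j, G.Adj i j → 0 < w i → 0 < w j := by
    intro i j hij hwi
    have h1 : lam * w j = ∑ k, A j k * w k := by
      have := congrFun hAw j
      simpa [mulVec, dotProduct, Pi.smul_apply, smul_eq_mul] using this.symm
    have h2 : A j i * w i ≤ ∑ k, A j k * w k :=
      Finset.single_le_sum (f := fun k => A j k * w k)
        (fun k _ => mul_nonneg (adjMat_nonneg G j k) (hwnn k)) (Finset.mem_univ i)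
    have h3 : A j i = 1 := by simp [hA, adjMat, hij.symm]
    rw [h3, one_mul] at h2
    rcases (hwnn j).lt_or_eq with h | h
    · exact h
    · exfalso; rw [← h1, ← h, mul_zero] at h2; linarith
  have hwpos : ∀ j, 0 < w j := by
    have walk : ∀ {i j : V} (p : G.Walk i j), 0 < w i → 0 < w j := by
      intro i j p
      induction p with
      | nil => exact id
      | cons h _ ih => exact fun hi => ih (step _ _ h hi)
    intro j
    exact walk ((hc.preconnected i₀ j).some) hw₀
  -- edge terms equality
  have hdotw : w ⬝ᵥ (A *ᵥ w) = lam * (w ⬝ᵥ w) := by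
    rw [hAw, dotProduct_smul, smul_eq_mul]
  have hdotv : v ⬝ᵥ (A *ᵥ v) = lam * (w ⬝ᵥ w) := by
    rw [hAv, dotProduct_smul, smul_eq_mul, hww]
  have hsum : ∑ i, ∑ j, A i j * (w i * w j - v i * v j) = 0 := by
    have : ∑ i, ∑ j, A i j * (w i * w j - v i * v j)
        = w ⬝ᵥ (A *ᵥ w) - v ⬝ᵥ (A *ᵥ v) := by
      rw [dot_mulVec_expand, dot_mulVec_expand, ← Finset.sum_sub_distrib]
      refine Finset.sum_congr rfl fun i _ => ?_
      rw [← Finset.sum_sub_distrib]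
      exact Finset.sum_congr rfl fun j _ => by ring
    rw [this, hdotw, hdotv, sub_self]
  have termnn : ∀ i j, 0 ≤ A i j * (w i * w j - v i * v j) := by
    intro i j
    refine mul_nonneg (adjMat_nonneg G i j) ?_
    have : v i * v j ≤ w i * w j := by
      calc v i * v j ≤ |v i * v j| := le_abs_self _
        _ = w i * w j := abs_mul _ _
    linarith
  have hterm0 : ∀ i j, A i j * (w i * w j - v i * v j) = 0 := by
    intro i j
    have houter := (Finset.sum_eq_zero_iff_of_nonneg
      (fun i _ => Finset.sum_nonneg fun j _ => termnn i j)).mp hsum i (Finset.mem_univ i)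
    exact (Finset.sum_eq_zero_iff_of_nonneg (fun j _ => termnn i j)).mp houter j
      (Finset.mem_univ j)
  have edge_pos : ∀ i j, G.Adj i j → 0 < v i * v j := by
    intro i j hij
    have h3 : A i j = 1 := by simp [hA, adjMat, hij]
    have := hterm0 i j
    rw [h3, one_mul, sub_eq_zero] at this
    rw [← this]
    exact mul_pos (hwpos i) (hwpos j)
  -- sign propagation
  have claim : ∀ j, 0 < v i₀ * v j := by
    have walk : ∀ {i j : V} (p : G.Walk i j), 0 < v i₀ * v i → 0 < v i₀ * v j := by
      intro i j p
      induction p with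
      | nil => exact id
      | cons h _ ih =>
          intro hi
          exact ih (sign_trans hi (edge_pos _ _ h))
    intro j
    exact walk ((hc.preconnected i₀ j).some) (mul_self_pos.mpr hi₀)
  intro i j
  have h1 := claim i
  have h2 := claim j
  have h3 : 0 < v i * v i₀ := by linarith [mul_comm (v i₀) (v i)] 
  exact sign_trans h3 h2

lemma finrank_ker_le_one {lam : ℝ} (hlam : 0 < lam) (G : SimpleGraph V) (hc : G.Connected)
    (hle : specRad G ≤ lam) :
    Module.finrank ℝ
      (LinearMap.ker ((1 : Matrix V V ℝ) - lam⁻¹ • adjMat G).mulVecLin) ≤ 1 := by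
  set K := LinearMap.ker ((1 : Matrix V V ℝ) - lam⁻¹ • adjMat G).mulVecLin with hK
  by_cases h : K = ⊥
  · rw [h, finrank_bot]; norm_num
  · obtain ⟨v, hvK, hv0⟩ := (Submodule.ne_bot_iff K).mp h
    have hvker : ((1 : Matrix V V ℝ) - lam⁻¹ • adjMat G) *ᵥ v = 0 := by
      have := hvK; rwa [hK, LinearMap.mem_ker, Matrix.mulVecLin_apply] at this
    have hsign := kernel_sign hlam G hc hle hvker hv0
    have b : V := hc.nonempty.some
    have hvb : v b ≠ 0 := by
      have := hsign b b; intro h0; rw [h0] at this; simp at this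
    have hKle : K ≤ Submodule.span ℝ {v} := by
      intro u huK
      have huker : ((1 : Matrix V V ℝ) - lam⁻¹ • adjMat G) *ᵥ u = 0 := by
        rwa [hK, LinearMap.mem_ker, Matrix.mulVecLin_apply] at huK
      set c := u b / v b with hcdef
      have huv : u = c • v := by
        by_contra hne
        have hzK : u - c • v ∈ K := K.sub_mem huK (K.smul_mem c hvK)
        have hz0 : u - c • v ≠ 0 := sub_ne_zero.mpr hne
        have hzker : ((1 : Matrix V V ℝ) - lam⁻¹ • adjMat G) *ᵥ (u - c • v) = 0 := by
          rwa [hK, LinearMap.mem_ker, Matrix.mulVecLin_apply] at hzK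
        have := kernel_sign hlam G hc hle hzker hz0 b b
        have hzb : (u - c • v) b = 0 := by
          simp only [Pi.sub_apply, Pi.smul_apply, smul_eq_mul, hcdef]
          field_simp
          ring
        rw [hzb] at this; simp at this
      rw [huv]
      exact Submodule.smul_mem _ c (Submodule.mem_span_singleton_self v)
    calc Module.finrank ℝ K ≤ Module.finrank ℝ (Submodule.span ℝ {v}) :=
          Submodule.finrank_mono hKle
      _ = 1 := finrank_span_singleton hv0

lemma specRad_eq_of_ker {lam : ℝ} (hlam : 0 < lam) (G : SimpleGraph V)
    (hle : specRad G ≤ lam)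
    (h : LinearMap.ker ((1 : Matrix V V ℝ) - lam⁻¹ • adjMat G).mulVecLin ≠ ⊥) :
    specRad G = lam := by
  obtain ⟨v, hvK, hv0⟩ := (Submodule.ne_bot_iff _).mp h
  rw [LinearMap.mem_ker, Matrix.mulVecLin_apply] at hvK
  have hAv : adjMat G *ᵥ v = lam • v := (N_mulVec_eq_zero_iff hlam G v).mp hvK
  have hmem : lam ∈ eigSet G := ⟨v, hv0, hAv⟩
  exact le_antisymm hle (le_csSup (eigSet_bddAbove G) hmem)

lemma rank_nullity (lam : ℝ) (G : SimpleGraph V) :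
    ((1 : Matrix V V ℝ) - lam⁻¹ • adjMat G).rank
      + Module.finrank ℝ
        (LinearMap.ker ((1 : Matrix V V ℝ) - lam⁻¹ • adjMat G).mulVecLin)
      = Fintype.card V := by
  have := LinearMap.finrank_range_add_finrank_ker
    ((1 : Matrix V V ℝ) - lam⁻¹ • adjMat G).mulVecLin
  rw [Module.finrank_pi] at this
  exact this

lemma eigSet_comap_subset {W₁ W₂ : Type*} [Fintype W₁] [Fintype W₂] (e : W₁ ≃ W₂)
    (G : SimpleGraph W₂) : eigSet (SimpleGraph.comap e G) ⊆ eigSet G := by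
  rintro μ ⟨v, hv0, hv⟩
  refine ⟨v ∘ e.symm, ?_, ?_⟩
  · intro h
    apply hv0
    funext i
    have := congrFun h (e i)
    simpa using this
  · funext x
    have hvx := congrFun hv (e.symm x)
    simp only [mulVec, dotProduct, Pi.smul_apply, smul_eq_mul] at hvx ⊢
    have hrw : ∀ j : W₁, adjMat (SimpleGraph.comap (⇑e) G) (e.symm x) j
        = adjMat G x (e j) := by
      intro j
      simp [adjMat, SimpleGraph.comap, Equiv.apply_symm_apply]
    rw [show (∑ j, adjMat G x j * (v ∘ e.symm) j)
        = ∑ j, adjMat G x (e j) * v j from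
      (Equiv.sum_comp e (fun y => adjMat G x y * v (e.symm y))).symm.trans
        (Finset.sum_congr rfl fun j _ => by simp)]
    rw [← Finset.sum_congr rfl fun j _ => congrArg (· * v j) (hrw j)]
    exact hvx

lemma comap_comap {W₁ W₂ : Type*} (e : W₁ ≃ W₂) (G : SimpleGraph W₂) :
    SimpleGraph.comap e.symm (SimpleGraph.comap e G) = G := by
  ext a b
  simp [SimpleGraph.comap]

lemma specRad_comap {W₁ W₂ : Type*} [Fintype W₁] [Fintype W₂] (e : W₁ ≃ W₂)
    (G : SimpleGraph W₂) : specRad (SimpleGraph.comap e G) = specRad G := by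
  rw [specRad_eq, specRad_eq]
  congr 1
  refine subset_antisymm (eigSet_comap_subset e G) ?_
  have := eigSet_comap_subset e.symm (SimpleGraph.comap e G)
  rwa [comap_comap] at this

lemma specRad_of_card_le_one {W : Type*} [Fintype W] (G : SimpleGraph W)
    (h : Fintype.card W ≤ 1) : specRad G = 0 := by
  rcases Nat.le_one_iff_eq_zero_or_eq_one.mp h with h0 | h1
  · have : IsEmpty W := Fintype.card_eq_zero_iff.mp h0
    have : eigSet G = ∅ := by
      ext μ
      simp only [Set.mem_empty_iff_false, iff_false]
      rintro ⟨v, hv0, -⟩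
      exact hv0 (funext fun a => (this.false a).elim)
    rw [specRad_eq, this, Real.sSup_empty]
  · have hsub : Subsingleton W := Fintype.card_le_one_iff_subsingleton.mp h1.le
    have hne : Nonempty W := Fintype.card_pos_iff.mp (by omega)
    have hA : adjMat G = 0 := by
      funext i j
      have : i = j := Subsingleton.elim i j
      simp [adjMat, this]
    have : eigSet G = {0} := by
      ext μ
      simp only [Set.mem_singleton_iff]
      constructor
      · rintro ⟨v, hv0, hv⟩
        rw [hA, Matrix.zero_mulVec] at hv
        obtain ⟨i, hi⟩ := Function.ne_iff.mp hv0
        have := congrFun hv.symm i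
        simp only [Pi.smul_apply, Pi.zero_apply, smul_eq_mul] at this
        rcases mul_eq_zero.mp this with h | h
        · exact h
        · exact absurd h hi
      · rintro rfl
        exact ⟨fun _ => 1, by
          intro h; have := congrFun h hne.some; simp at this, by
          rw [hA, Matrix.zero_mulVec, zero_smul]⟩
    rw [specRad_eq, this, csSup_singleton]

lemma specOrder_mem {l : ℝ} {k : ℕ} (h : specOrder l = (k : ℕ∞)) :
    ∃ G : SimpleGraph (Fin k), specRad G = l := by
  simp only [specOrder] at h
  set T := {k : ℕ | ∃ G : SimpleGraph (Fin k), specRad G = l} with hT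
  have hTne : T.Nonempty := by
    by_contra hemp
    rw [Set.not_nonempty_iff_eq_empty] at hemp
    rw [hemp, Set.image_empty, sInf_empty] at h
    exact (ENat.coe_ne_top k) h.symm
  have hk₀T : sInf T ∈ T := Nat.sInf_mem hTne
  have h1 : (k : ℕ∞) ≤ ((sInf T : ℕ) : ℕ∞) := by
    rw [← h]
    exact sInf_le (Set.mem_image_of_mem _ hk₀T)
  have h2 : ((sInf T : ℕ) : ℕ∞) ≤ (k : ℕ∞) := by
    rw [← h]
    refine le_sInf ?_
    rintro x ⟨m, hm, rfl⟩
    show ((sInf T : ℕ) : ℕ∞) ≤ ((m : ℕ) : ℕ∞)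
    exact_mod_cast Nat.sInf_le hm
  have : k = sInf T := by exact_mod_cast le_antisymm h1 h2
  rw [this]; exact hk₀T

end helpers

theorem stmt6 (lam : ℝ) (hlam : 0 < lam) (V : Type) [Fintype V] [DecidableEq V]
    (G : SimpleGraph V) (hc : G.Connected) (hle : specRad G ≤ lam) :
    (∀ k : ℕ, specOrder lam = (k : ℕ∞) →
      (Fintype.card V : ℝ) ≤ ((k : ℝ) / ((k : ℝ) - 1)) *
        ((1 : Matrix V V ℝ) - lam⁻¹ • adjMat G).rank) ∧
    (specOrder lam = ⊤ →
      Fintype.card V ≤ ((1 : Matrix V V ℝ) - lam⁻¹ • adjMat G).rank) := by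
  classical
  set N := (1 : Matrix V V ℝ) - lam⁻¹ • adjMat G with hN
  set K := LinearMap.ker N.mulVecLin with hK
  have hrn : N.rank + Module.finrank ℝ K = Fintype.card V := rank_nullity lam G
  have hkerle : Module.finrank ℝ K ≤ 1 := finrank_ker_le_one hlam G hc hle
  have hnV : 0 < Fintype.card V := Fintype.card_pos_iff.mpr hc.nonempty
  have htrans : specRad G = lam →
      (Fintype.card V) ∈ {k : ℕ | ∃ H : SimpleGraph (Fin k), specRad H = lam} := by
    intro hs
    exact ⟨SimpleGraph.comap (⇑(Fintype.equivFin V).symm) G, (specRad_comap _ G).trans hs⟩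
  constructor
  · intro k hk
    obtain ⟨Gk, hGk⟩ := specOrder_mem hk
    have hk2 : 2 ≤ k := by
      by_contra hlt
      push_neg at hlt
      have hcard : Fintype.card (Fin k) ≤ 1 := by
        simpa using Nat.lt_succ_iff.mp hlt
      have h0 := (specRad_of_card_le_one Gk hcard).symm.trans hGk
      linarith
    have hk1R : (1:ℝ) < (k:ℝ) := by
      have : (2:ℝ) ≤ (k:ℝ) := by exact_mod_cast hk2
      linarith
    by_cases hbot : K = ⊥
    · have h0 : Module.finrank ℝ K = 0 := by rw [hbot]; exact finrank_bot ℝ _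
      have hr : N.rank = Fintype.card V := by omega
      rw [hr]
      have hge1 : (1:ℝ) ≤ (k:ℝ)/((k:ℝ)-1) := by
        rw [le_div_iff₀ (by linarith)]
        linarith
      calc ((Fintype.card V):ℝ) = 1 * ((Fintype.card V):ℝ) := (one_mul _).symm
        _ ≤ ((k:ℝ)/((k:ℝ)-1)) * ((Fintype.card V):ℝ) :=
            mul_le_mul_of_nonneg_right hge1 (Nat.cast_nonneg _)
    · have hs : specRad G = lam := specRad_eq_of_ker hlam G hle hbot
      have hfk1 : Module.finrank ℝ K = 1 := by
        have hne : Module.finrank ℝ K ≠ 0 := fun h0 =>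
          hbot (Submodule.finrank_eq_zero.mp h0)
        omega
      have hkn : k ≤ Fintype.card V := by
        have hle' : specOrder lam ≤ (Fintype.card V : ℕ∞) := sInf_le ⟨_, htrans hs, rfl⟩
        rw [hk] at hle'
        exact_mod_cast hle'
      have hr : N.rank + 1 = Fintype.card V := by omega
      have hrR : (N.rank : ℝ) = (Fintype.card V : ℝ) - 1 := by
        have := congrArg (fun m : ℕ => (m:ℝ)) hr
        push_cast at this
        linarith
      rw [div_mul_eq_mul_div, le_div_iff₀ (by linarith)]
      have hknR : (k:ℝ) ≤ (Fintype.card V : ℝ) := by exact_mod_cast hkn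
      nlinarith [hrR]
  · intro htop
    have hbot : K = ⊥ := by
      by_contra hbot
      have hs := specRad_eq_of_ker hlam G hle hbot
      have hle' : specOrder lam ≤ (Fintype.card V : ℕ∞) := sInf_le ⟨_, htrans hs, rfl⟩
      rw [htop] at hle'
      exact (ENat.coe_ne_top (Fintype.card V)) (top_le_iff.mp hle')
    have h0 : Module.finrank ℝ K = 0 := by rw [hbot]; exact finrank_bot ℝ _
    omega
end

section
/- Let α ∈ (0,1) and λ := (1−α)/(2α). If λ is a totally real algebraic integer and some real root λ' of the minimal polynomial of λ over ℚ satisfies λ' > λ (i.e., λ is not the largest among its conjugate elements), then n ≤ N_α(n) ≤ n + 2 for all n ≥ 1. -/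
open scoped Classical

section Aux
open Polynomial Matrix

lemma my_eval_charpoly {m : Type*} [Fintype m] [DecidableEq m] {R : Type*} [CommRing R]
    (M : Matrix m m R) (r : R) :
    (Matrix.charpoly M).eval r = Matrix.det (r • (1 : Matrix m m R) - M) := by
  rw [Matrix.charpoly, ← Polynomial.coe_evalRingHom, RingHom.map_det]
  congr 1
  ext i j
  by_cases h : i = j
  · subst h
    simp [Matrix.charmatrix_apply_eq, Matrix.one_apply]
  · simp [Matrix.charmatrix_apply_ne _ _ _ h, Matrix.one_apply, h]

lemma code_card_le (a : ℝ) (ha0 : 0 < a) (ha1 : a < 1) (l' : ℝ)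
    (hl' : Polynomial.aeval l' (minpoly ℚ ((1 - a) / (2 * a))) = 0)
    (hlt : (1 - a) / (2 * a) < l')
    {n : ℕ} (C : Finset (EuclideanSpace ℝ (Fin n)))
    (hC : (∀ v ∈ C, ‖v‖ = 1) ∧
      ∀ v ∈ C, ∀ w ∈ C, v ≠ w → (inner ℝ v w : ℝ) ∈ ({-a, a} : Set ℝ)) :
    C.card ≤ n := by
  by_contra hcard
  push_neg at hcard
  set l : ℝ := (1 - a) / (2 * a) with hl
  have ha : a ≠ 0 := ne_of_gt ha0
  have hal : a * (2 * l + 1) = 1 := by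
    rw [hl]; field_simp; ring
  -- the matrix of coordinates
  set A : Matrix (Fin n) {x // x ∈ C} ℝ := fun i v => (v : EuclideanSpace ℝ (Fin n)) i with hA
  set G : Matrix {x // x ∈ C} {x // x ∈ C} ℝ := Aᵀ * A with hGdef
  -- the Seidel matrix over ℤ
  set T : Matrix {x // x ∈ C} {x // x ∈ C} ℤ := fun v w =>
    if (v : EuclideanSpace ℝ (Fin n)) = w then 0
    else if (inner ℝ (v : EuclideanSpace ℝ (Fin n)) (w : EuclideanSpace ℝ (Fin n)) : ℝ) = a
      then 1 else -1 with hT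
  set S : Matrix {x // x ∈ C} {x // x ∈ C} ℝ := T.map (Int.cast : ℤ → ℝ) with hS
  have hGA : ∀ v w, G v w = (inner ℝ (v : EuclideanSpace ℝ (Fin n)) (w : EuclideanSpace ℝ (Fin n)) : ℝ) := by
    intro v w
    rw [hGdef, Matrix.mul_apply]
    rw [PiLp.inner_apply]
    simp [hA, Matrix.transpose_apply, RCLike.inner_apply, starRingEnd_apply]
    exact Finset.sum_congr rfl fun x _ => mul_comm _ _
  have hSapp : ∀ v w, S v w = ((T v w : ℤ) : ℝ) := fun v w => rfl
  have hTapp : ∀ v w, T v w = (if (v : EuclideanSpace ℝ (Fin n)) = w then 0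
      else if (inner ℝ (v : EuclideanSpace ℝ (Fin n)) (w : EuclideanSpace ℝ (Fin n)) : ℝ) = a
      then 1 else -1) := fun v w => rfl
  have hG : G = 1 + a • S := by
    ext v w
    by_cases hvw : (v : EuclideanSpace ℝ (Fin n)) = w
    · have hvw' : v = w := Subtype.ext hvw
      subst hvw'
      rw [hGA]
      have h1 : (inner ℝ (v : EuclideanSpace ℝ (Fin n)) (v : EuclideanSpace ℝ (Fin n)) : ℝ)
          = ‖(v : EuclideanSpace ℝ (Fin n))‖ ^ 2 := real_inner_self_eq_norm_sq _
      rw [h1, hC.1 v v.2]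
      simp [hSapp, hTapp, Matrix.one_apply]
    · have hvw' : v ≠ w := fun h => hvw (congrArg _ h)
      rw [hGA]
      have hmem := hC.2 v v.2 w w.2 hvw
      have hone : (1 : Matrix {x // x ∈ C} {x // x ∈ C} ℝ) v w = 0 :=
        Matrix.one_apply_ne hvw'
      rcases hmem with hm | hm
      · have hne : (inner ℝ (v : EuclideanSpace ℝ (Fin n)) (w : EuclideanSpace ℝ (Fin n)) : ℝ) ≠ a := by
          rw [hm]; intro h; nlinarith
        simp only [Matrix.add_apply, hone, Matrix.smul_apply, hSapp, hTapp,
          if_neg hvw, if_neg hne, Int.cast_neg, Int.cast_one, smul_eq_mul, zero_add, hm]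
        rw [if_neg (show ¬(-a : ℝ) = a by intro h; nlinarith)]
        push_cast; ring
      · rw [Set.mem_singleton_iff] at hm
        simp only [Matrix.add_apply, hone, Matrix.smul_apply, hSapp, hTapp,
          if_neg hvw, if_pos hm, Int.cast_one, smul_eq_mul, zero_add, hm]
        norm_num
  -- kernel vector of A
  have hker : ∃ v : {x // x ∈ C} → ℝ, v ≠ 0 ∧ A.mulVec v = 0 := by
    by_contra hk
    push_neg at hk
    have hinj : Function.Injective A.mulVecLin := by
      rw [← LinearMap.ker_eq_bot, Submodule.eq_bot_iff]
      intro x hx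
      by_contra hx0
      exact hx0 (by simpa using (hk x hx0 hx).elim)
    have := LinearMap.finrank_le_finrank_of_injective hinj
    rw [Module.finrank_fintype_fun_eq_card, Module.finrank_fintype_fun_eq_card,
      Fintype.card_coe, Fintype.card_fin] at this
    omega
  obtain ⟨v0, hv0, hv0ker⟩ := hker
  have hGdet : G.det = 0 := by
    rw [← Matrix.exists_mulVec_eq_zero_iff]
    refine ⟨v0, hv0, ?_⟩
    rw [hGdef, ← Matrix.mulVec_mulVec, hv0ker, Matrix.mulVec_zero]
  -- -(2l+1) is a root of charpoly S
  have hroot : (Matrix.charpoly S).eval (-(2 * l + 1)) = 0 := by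
    rw [my_eval_charpoly]
    have hmat : (-(2 * l + 1)) • (1 : Matrix {x // x ∈ C} {x // x ∈ C} ℝ) - S
        = (-(2 * l + 1)) • G := by
      rw [hG, smul_add]
      have : (-(2 * l + 1)) • (a • S) = -S := by
        rw [smul_smul]
        have : (-(2 * l + 1)) * a = -1 := by nlinarith [hal]
        rw [this]; simp
      rw [this]; abel
    rw [hmat, Matrix.det_smul, hGdet, mul_zero]
  -- pass through ℚ
  set pQ : ℚ[X] := (Matrix.charpoly T).map (Int.castRingHom ℚ) with hpQ
  have hSchar : Matrix.charpoly S = pQ.map (algebraMap ℚ ℝ) := by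
    rw [hS, show (Int.cast : ℤ → ℝ) = ⇑(Int.castRingHom ℝ) from rfl,
      Matrix.charpoly_map, hpQ, Polynomial.map_map]
    congr 1
  have haev : ∀ x : ℝ, Polynomial.aeval x pQ = (Matrix.charpoly S).eval x := by
    intro x
    rw [Polynomial.aeval_def, ← Polynomial.eval_map, hSchar]
  have hqroot : Polynomial.aeval (-(2 * l + 1) : ℝ) pQ = 0 := by
    rw [haev]; exact hroot
  -- compose with -(2X+1)
  set u : ℚ[X] := -(2 * Polynomial.X + 1) with hu
  have haevu : ∀ x : ℝ, Polynomial.aeval x u = -(2 * x + 1) := by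
    intro x
    rw [hu]
    simp only [map_neg, map_add, _root_.map_mul, Polynomial.aeval_X, _root_.map_one, map_ofNat]
  have hcomp : Polynomial.aeval (l : ℝ) (pQ.comp u) = 0 := by
    rw [Polynomial.aeval_comp, haevu]
    exact hqroot
  have hdvd : minpoly ℚ l ∣ pQ.comp u := minpoly.dvd ℚ l hcomp
  obtain ⟨r, hr⟩ := hdvd
  have hl'root : Polynomial.aeval (-(2 * l' + 1) : ℝ) pQ = 0 := by
    have : Polynomial.aeval (l' : ℝ) (pQ.comp u) = 0 := by
      rw [hr, _root_.map_mul, hl', zero_mul]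
    rwa [Polynomial.aeval_comp, haevu] at this
  -- so -(2l'+1) is an eigenvalue of S
  have hdet' : Matrix.det ((-(2 * l' + 1)) • (1 : Matrix {x // x ∈ C} {x // x ∈ C} ℝ) - S) = 0 := by
    rw [← my_eval_charpoly, ← haev, hl'root]
  obtain ⟨w, hw0, hweq⟩ := Matrix.exists_mulVec_eq_zero_iff.mpr hdet'
  have hSw : S.mulVec w = (-(2 * l' + 1)) • w := by
    have := hweq
    rw [Matrix.sub_mulVec, Matrix.smul_mulVec, Matrix.one_mulVec, sub_eq_zero] at this
    exact this.symm
  -- contradiction with PSD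
  have hGw : G.mulVec w = (1 + a * (-(2 * l' + 1))) • w := by
    rw [hG, Matrix.add_mulVec, Matrix.one_mulVec, Matrix.smul_mulVec, hSw]
    ext i
    simp [Pi.smul_apply, smul_eq_mul]
    ring
  have hquad : w ⬝ᵥ G.mulVec w = (1 + a * (-(2 * l' + 1))) * (w ⬝ᵥ w) := by
    rw [hGw]
    simp only [dotProduct, Pi.smul_apply, smul_eq_mul, Finset.mul_sum]
    exact Finset.sum_congr rfl fun i _ => by ring
  have hpsd : 0 ≤ w ⬝ᵥ G.mulVec w := by
    rw [hGdef, ← Matrix.mulVec_mulVec, Matrix.dotProduct_mulVec, Matrix.vecMul_transpose]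
    exact Finset.sum_nonneg fun i _ => mul_self_nonneg _
  have hww : 0 < w ⬝ᵥ w := by
    obtain ⟨i, hi⟩ := Function.ne_iff.mp hw0
    exact Finset.sum_pos' (fun j _ => mul_self_nonneg _)
      ⟨i, Finset.mem_univ i, mul_self_pos.mpr hi⟩
  have hneg : 1 + a * (-(2 * l' + 1)) < 0 := by nlinarith [hal]
  nlinarith [hquad, hpsd, hww, hneg]

end Aux

section Aux2

lemma exists_code (a : ℝ) (ha0 : 0 < a) (ha1 : a < 1) (n : ℕ) (hn : 1 ≤ n) :
    ∃ C : Finset (EuclideanSpace ℝ (Fin n)),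
      ((∀ v ∈ C, ‖v‖ = 1) ∧
        ∀ v ∈ C, ∀ w ∈ C, v ≠ w → (inner ℝ v w : ℝ) ∈ ({-a, a} : Set ℝ)) ∧ C.card = n := by
  have hs0 : (0:ℝ) < 1 - a := by linarith
  have hn0 : (0:ℝ) < n := by exact_mod_cast hn
  set s : ℝ := Real.sqrt (1 - a) with hsdef
  set r : ℝ := Real.sqrt (1 - a + n * a) with hrdef
  have hs2 : s ^ 2 = 1 - a := Real.sq_sqrt (le_of_lt hs0)
  have hr2 : r ^ 2 = 1 - a + n * a := Real.sq_sqrt (by nlinarith)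
  have hspos : 0 < s := Real.sqrt_pos.mpr hs0
  set t : ℝ := (r - s) / n with htdef
  have hnt : (n:ℝ) * t = r - s := by
    rw [htdef]; field_simp
  have hkey : 2 * s * t + n * t ^ 2 = a := by
    have h1 : (n:ℝ) * (2 * s * t + n * t ^ 2) = 2 * s * ((n:ℝ) * t) + ((n:ℝ) * t) ^ 2 := by ring
    have h2 : 2 * s * ((n:ℝ) * t) + ((n:ℝ) * t) ^ 2 = r ^ 2 - s ^ 2 := by rw [hnt]; ring
    have h3 : (n:ℝ) * (2 * s * t + n * t ^ 2) = (n:ℝ) * a := by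
      rw [h1, h2, hr2, hs2]; ring
    exact mul_left_cancel₀ (ne_of_gt hn0) h3
  set o : EuclideanSpace ℝ (Fin n) := (WithLp.equiv 2 (Fin n → ℝ)).symm (fun _ => 1) with hodef
  set v : Fin n → EuclideanSpace ℝ (Fin n) :=
    fun i => s • EuclideanSpace.single i (1:ℝ) + t • o with hvdef
  have hoapp : ∀ j, o j = 1 := fun j => rfl
  have hoo : (inner ℝ o o : ℝ) = n := by
    rw [PiLp.inner_apply]
    simp [hoapp, RCLike.inner_apply]
  have heo : ∀ i : Fin n, (inner ℝ (EuclideanSpace.single i (1:ℝ)) o : ℝ) = 1 := by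
    intro i
    rw [EuclideanSpace.inner_single_left]
    simp [hoapp]
  have hoe : ∀ i : Fin n, (inner ℝ o (EuclideanSpace.single i (1:ℝ)) : ℝ) = 1 := by
    intro i
    rw [EuclideanSpace.inner_single_right]
    simp [hoapp]
  have hee : ∀ i k : Fin n, (inner ℝ (EuclideanSpace.single i (1:ℝ)) (EuclideanSpace.single k (1:ℝ)) : ℝ)
      = if i = k then 1 else 0 := by
    intro i k
    rw [EuclideanSpace.inner_single_left]
    simp [EuclideanSpace.single_apply, eq_comm]
  have hinner : ∀ i k : Fin n, (inner ℝ (v i) (v k) : ℝ)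
      = (if i = k then s ^ 2 else 0) + (2 * s * t + n * t ^ 2) := by
    intro i k
    rw [hvdef]
    simp only [inner_add_left, inner_add_right, real_inner_smul_left, real_inner_smul_right]
    rw [hee, heo, hoe, hoo]
    by_cases h : i = k <;> simp [h] <;> ring
  have hnorm : ∀ i, ‖v i‖ = 1 := by
    intro i
    have h1 : (inner ℝ (v i) (v i) : ℝ) = 1 := by
      rw [hinner, if_pos rfl, hs2, hkey]; ring
    have h2 : ‖v i‖ ^ 2 = 1 := by
      rw [← real_inner_self_eq_norm_sq, h1]
    have h3 := norm_nonneg (v i)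
    nlinarith
  have hvinj : Function.Injective v := by
    intro i k h
    by_contra hik
    have h1 : v i i = v k i := by rw [h]
    have h2 : v i i = s * 1 + t := by
      simp [hvdef, PiLp.add_apply, PiLp.smul_apply, EuclideanSpace.single_apply, hoapp,
        smul_eq_mul]
    have h3 : v k i = s * 0 + t := by
      simp [hvdef, PiLp.add_apply, PiLp.smul_apply, EuclideanSpace.single_apply, hoapp,
        smul_eq_mul, Ne.symm hik]
    rw [h2, h3] at h1
    nlinarith
  refine ⟨Finset.image v Finset.univ, ⟨?_, ?_⟩, ?_⟩
  · intro w hw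
    obtain ⟨i, _, rfl⟩ := Finset.mem_image.mp hw
    exact hnorm i
  · intro w1 hw1 w2 hw2 hne
    obtain ⟨i, _, rfl⟩ := Finset.mem_image.mp hw1
    obtain ⟨k, _, rfl⟩ := Finset.mem_image.mp hw2
    have hik : i ≠ k := fun h => hne (by rw [h])
    right
    rw [hinner, if_neg hik, hkey]
    simp
  · rw [Finset.card_image_of_injective _ hvinj, Finset.card_univ, Fintype.card_fin]

end Aux2

theorem stmt16 (a : ℝ) (ha : a ∈ Set.Ioo (0 : ℝ) 1)
    (htr : TotallyRealAlgInt ((1 - a) / (2 * a)))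
    (hconj : ∃ l' : ℝ, Polynomial.aeval l' (minpoly ℚ ((1 - a) / (2 * a))) = 0 ∧
      (1 - a) / (2 * a) < l') :
    ∀ n : ℕ, 1 ≤ n → n ≤ Nmax a n ∧ Nmax a n ≤ n + 2 := by
  obtain ⟨ha0, ha1⟩ := ha
  obtain ⟨l', hl', hlt⟩ := hconj
  intro n hn
  have hub : ∀ k ∈ {k : ℕ | ∃ C : Finset (EuclideanSpace ℝ (Fin n)),
      SphericalCode n {-a, a} C ∧ C.card = k}, k ≤ n := by
    rintro k ⟨C, hC, hk⟩
    exact hk ▸ code_card_le a ha0 ha1 l' hl' hlt C ⟨hC.1, hC.2⟩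
  have hbdd : BddAbove {k : ℕ | ∃ C : Finset (EuclideanSpace ℝ (Fin n)),
      SphericalCode n {-a, a} C ∧ C.card = k} := ⟨n, hub⟩
  obtain ⟨C, hC, hCcard⟩ := exists_code a ha0 ha1 n hn
  have hmem : n ∈ {k : ℕ | ∃ C : Finset (EuclideanSpace ℝ (Fin n)),
      SphericalCode n {-a, a} C ∧ C.card = k} := ⟨C, ⟨hC.1, hC.2⟩, hCcard⟩
  constructor
  · exact le_csSup hbdd hmem
  · exact le_trans (csSup_le ⟨n, hmem⟩ hub) (by omega)
end
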